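/- Let k ∈ L¹(ℝ, ℂ), let Ω ⊆ ℝ be a finite set, let a : ℝ → ℂ, let x(t) = Σ_{ω ∈ Ω} a(ω) e^{iωt}, and let y = k ⋆ x be the convolution. Then for every ν ∈ ℝ the Besicovitch–Fourier coefficient of y at frequency ν, namely the limit as T → ∞ of (1/(2T)) ∫_{-T}^{T} y(t) e^{-iνt} dt, equals K(ν) · a(ν) if ν ∈ Ω and 0 otherwise, where K(ν) = ∫_{ℝ} k(τ) e^{-iντ} dτ. In particular, if a(ω) ≠ 0 and K(ω) ≠ 0 for all ω ∈ Ω, then the set of frequencies at which y has a nonzero Besicovitch–Fourier coefficient is exactly Ω, i.e. the frequency sets of the image and the preimage coincide. -/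

import Mathlib

open Filter MeasureTheory intervalIntegral

lemma half_inv_tendsto : Tendsto (fun T : ℝ => 1 / (2 * (T : ℂ))) atTop (nhds 0) := by
  have h : Tendsto (fun T : ℝ => (2 * T)⁻¹) atTop (nhds 0) :=
    tendsto_inv_atTop_zero.comp (tendsto_id.const_mul_atTop two_pos)
  have h2 := (Complex.continuous_ofReal.tendsto 0).comp h
  simp only [Complex.ofReal_zero] at h2
  exact h2.congr fun T => by simp only [Function.comp_apply]; push_cast; ring

lemma mean_exp (μ : ℝ) :
    Tendsto (fun T : ℝ => (1 / (2 * (T : ℂ))) * ∫ t in (-T)..T, Complex.exp (Complex.I * μ * t))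
      atTop (nhds (if μ = 0 then 1 else 0)) := by
  rcases eq_or_ne μ 0 with h | h
  · subst h
    simp only [if_pos rfl]
    have heq : ∀ᶠ T : ℝ in atTop,
        (1:ℂ) = (1 / (2 * (T : ℂ))) * ∫ t in (-T)..T, Complex.exp (Complex.I * (0:ℝ) * t) := by
      filter_upwards [eventually_gt_atTop (0:ℝ)] with T hT
      have hT' : (T : ℂ) ≠ 0 := by exact_mod_cast hT.ne'
      simp only [Complex.ofReal_zero, mul_zero, zero_mul, Complex.exp_zero]
      rw [intervalIntegral.integral_const]
      simp only [Complex.real_smul]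
      push_cast
      field_simp
      ring
    exact Tendsto.congr' heq tendsto_const_nhds
  · simp only [if_neg h]
    have hc : Complex.I * μ ≠ 0 := by
      simp [Complex.I_ne_zero, Complex.ofReal_eq_zero, h]
    have hint : ∀ T : ℝ, (∫ t in (-T)..T, Complex.exp (Complex.I * μ * t)) =
        (Complex.exp (Complex.I * μ * T) - Complex.exp (Complex.I * μ * (-T))) / (Complex.I * μ) := by
      intro T
      have := integral_exp_mul_complex (a := -T) (b := T) hc
      simpa [mul_assoc] using this
    refine half_inv_tendsto.zero_mul_isBoundedUnder_le ?_
    refine isBoundedUnder_of ⟨2 / ‖Complex.I * (μ:ℂ)‖, fun T => ?_⟩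
    simp only [Function.comp_apply, hint T]
    rw [norm_div]
    have hpos : 0 < ‖Complex.I * (μ:ℂ)‖ := norm_pos_iff.mpr hc
    gcongr
    calc ‖Complex.exp (Complex.I * μ * T) - Complex.exp (Complex.I * μ * (-T))‖
        ≤ ‖Complex.exp (Complex.I * μ * T)‖ + ‖Complex.exp (Complex.I * μ * (-T))‖ :=
          norm_sub_le _ _
      _ ≤ 2 := by
          rw [Complex.norm_exp, Complex.norm_exp]
          norm_num [Complex.mul_re, Complex.mul_im, Complex.I_re, Complex.I_im]

lemma integrable_kernel {k : ℝ → ℂ} (hk : Integrable k) (ω : ℝ) :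
    Integrable (fun τ : ℝ => k τ * Complex.exp (-(Complex.I * ω * τ))) := by
  refine hk.norm.mono' (hk.aestronglyMeasurable.mul ?_) (Eventually.of_forall fun τ => ?_)
  · exact (Complex.continuous_exp.comp (by continuity)).aestronglyMeasurable
  · rw [norm_mul]
    have : ‖Complex.exp (-(Complex.I * ω * τ))‖ = 1 := by
      rw [Complex.norm_exp]
      norm_num [Complex.mul_re, Complex.mul_im, Complex.I_re, Complex.I_im]
    rw [this, mul_one]

lemma y_repr {k : ℝ → ℂ} (hk : Integrable k) (Ω : Finset ℝ) (a : ℝ → ℂ) (K : ℝ → ℂ)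
    (hK : K = fun ν : ℝ => ∫ τ : ℝ, k τ * Complex.exp (-(Complex.I * ν * τ))) (t : ℝ) :
    (∫ τ : ℝ, k τ * ∑ ω ∈ Ω, a ω * Complex.exp (Complex.I * ω * (↑(t - τ)))) =
      ∑ ω ∈ Ω, (K ω * a ω) * Complex.exp (Complex.I * ω * t) := by
  have hfun : (fun τ : ℝ => k τ * ∑ ω ∈ Ω, a ω * Complex.exp (Complex.I * ω * (↑(t - τ)))) =
      fun τ : ℝ => ∑ ω ∈ Ω, (a ω * Complex.exp (Complex.I * ω * t)) *
        (k τ * Complex.exp (-(Complex.I * ω * τ))) := by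
    funext τ
    rw [Finset.mul_sum]
    refine Finset.sum_congr rfl fun ω _ => ?_
    rw [show (Complex.I * ω * (↑(t - τ)) : ℂ) = Complex.I * ω * t + -(Complex.I * ω * τ) by
      push_cast; ring, Complex.exp_add]
    ring
  rw [hfun, integral_finset_sum _ fun ω _ => ((integrable_kernel hk ω).const_mul _)]
  refine Finset.sum_congr rfl fun ω _ => ?_
  rw [MeasureTheory.integral_const_mul, hK]
  ring

/-- Corollary of Theorem 2 of the paper: For `y = k ⋆ x` the convolution
of an integrable kernel `k` with the trigonometric polynomial
`x(t) = Σ_{ω ∈ Ω} a(ω) e^{iωt}`, the Besicovitch–Fourier coefficient of `y` at every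
frequency `ν`, namely `lim_{T → ∞} (1/(2T)) ∫_{-T}^{T} y(t) e^{-iνt} dt`, equals
`K(ν) ⬝ a(ν)` if `ν ∈ Ω` and `0` otherwise, where `K(ν) = ∫_ℝ k(τ) e^{-iντ} dτ`.
In particular, if `a(ω) ≠ 0` and `K(ω) ≠ 0` for all `ω ∈ Ω`, then the set of
frequencies at which `y` has a nonzero Besicovitch–Fourier coefficient is exactly `Ω`:
the frequency sets of the image and the preimage coincide. -/
theorem besicovitch_fourier_coeff_of_convolution (k : ℝ → ℂ) (hk : Integrable k)
    (Ω : Finset ℝ) (a : ℝ → ℂ)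
    (x : ℝ → ℂ) (hx : x = fun t : ℝ => ∑ ω ∈ Ω, a ω * Complex.exp (Complex.I * ω * t))
    (y : ℝ → ℂ) (hy : y = fun t : ℝ => ∫ τ : ℝ, k τ * x (t - τ))
    (K : ℝ → ℂ) (hK : K = fun ν : ℝ => ∫ τ : ℝ, k τ * Complex.exp (-(Complex.I * ν * τ))) :
    (∀ ν : ℝ,
      Tendsto
        (fun T : ℝ => (1 / (2 * (T : ℂ))) *
          ∫ t in (-T)..T, y t * Complex.exp (-(Complex.I * ν * t)))
        atTop (nhds (if ν ∈ Ω then K ν * a ν else 0))) ∧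
    ((∀ ω ∈ Ω, a ω ≠ 0) → (∀ ω ∈ Ω, K ω ≠ 0) →
      {ν : ℝ | ∃ c : ℂ, c ≠ 0 ∧
        Tendsto
          (fun T : ℝ => (1 / (2 * (T : ℂ))) *
            ∫ t in (-T)..T, y t * Complex.exp (-(Complex.I * ν * t)))
          atTop (nhds c)} = ↑Ω) := by
  have hyr : ∀ t : ℝ, y t = ∑ ω ∈ Ω, (K ω * a ω) * Complex.exp (Complex.I * ω * t) := by
    intro t
    rw [hy]
    simp only [hx]
    exact y_repr hk Ω a K hK t
  have main : ∀ ν : ℝ,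
      Tendsto
        (fun T : ℝ => (1 / (2 * (T : ℂ))) *
          ∫ t in (-T)..T, y t * Complex.exp (-(Complex.I * ν * t)))
        atTop (nhds (if ν ∈ Ω then K ν * a ν else 0)) := by
    intro ν
    have hiint : ∀ (ω : ℝ) (T : ℝ),
        IntervalIntegrable (fun t : ℝ => Complex.exp (Complex.I * (↑(ω - ν)) * t))
          volume (-T) T :=
      fun ω T => (Complex.continuous_exp.comp (by continuity)).intervalIntegrable _ _
    have hint : ∀ T : ℝ, (∫ t in (-T)..T, y t * Complex.exp (-(Complex.I * ν * t))) =
        ∑ ω ∈ Ω, (K ω * a ω) * ∫ t in (-T)..T, Complex.exp (Complex.I * (↑(ω - ν)) * t) := by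
      intro T
      have h1 : ∀ t : ℝ, y t * Complex.exp (-(Complex.I * ν * t)) =
          ∑ ω ∈ Ω, (K ω * a ω) * Complex.exp (Complex.I * (↑(ω - ν)) * t) := by
        intro t
        rw [hyr t, Finset.sum_mul]
        refine Finset.sum_congr rfl fun ω _ => ?_
        rw [mul_assoc, ← Complex.exp_add]
        congr 2
        push_cast; ring
      rw [intervalIntegral.integral_congr (fun t _ => h1 t)]
      rw [intervalIntegral.integral_finset_sum fun ω _ => ((hiint ω T).const_mul _)]
      exact Finset.sum_congr rfl fun ω _ => intervalIntegral.integral_const_mul _ _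
    have heq : (fun T : ℝ => (1 / (2 * (T : ℂ))) *
        ∫ t in (-T)..T, y t * Complex.exp (-(Complex.I * ν * t))) =
        fun T : ℝ => ∑ ω ∈ Ω, (K ω * a ω) *
          ((1 / (2 * (T : ℂ))) * ∫ t in (-T)..T, Complex.exp (Complex.I * (↑(ω - ν)) * t)) := by
      funext T
      rw [hint T, Finset.mul_sum]
      exact Finset.sum_congr rfl fun ω _ => by ring
    rw [heq]
    have hlim : Tendsto
        (fun T : ℝ => ∑ ω ∈ Ω, (K ω * a ω) *
          ((1 / (2 * (T : ℂ))) * ∫ t in (-T)..T, Complex.exp (Complex.I * (↑(ω - ν)) * t)))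
        atTop (nhds (∑ ω ∈ Ω, (K ω * a ω) * (if ω - ν = 0 then 1 else 0))) :=
      tendsto_finset_sum _ fun ω _ => (mean_exp (ω - ν)).const_mul _
    have hval : (∑ ω ∈ Ω, (K ω * a ω) * (if ω - ν = 0 then 1 else 0)) =
        (if ν ∈ Ω then K ν * a ν else 0) := by
      rw [← Finset.sum_ite_eq' Ω ν (fun ω => K ω * a ω)]
      refine Finset.sum_congr rfl fun ω _ => ?_
      by_cases h : ω = ν
      · simp [h]
      · simp [h, sub_ne_zero.mpr h]
    rwa [hval] at hlim
  refine ⟨main, fun ha hKne => ?_⟩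
  ext ν
  simp only [Set.mem_setOf_eq, Finset.coe_sort_coe, Finset.mem_coe]
  constructor
  · rintro ⟨c, hc, hten⟩
    by_contra hν
    have h0 := main ν
    rw [if_neg hν] at h0
    exact hc (tendsto_nhds_unique hten h0)
  · intro hν
    refine ⟨K ν * a ν, mul_ne_zero (hKne ν hν) (ha ν hν), ?_⟩
    have := main ν
    rwa [if_pos hν] at this
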